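/- Let c : Fin p → ℕ be a nonincreasing sequence of positive integers with Hirsch index h ≥ 1. Define A = (∑_{j=1}^{h} c_j)/h (Jin's A-index, as a real number) and g the Egghe g-index. Then g ≤ A. -/

import Mathlib

/-- The Egghe `g`-index is at most Jin's `A`-index. -/
theorem stmt_6 (p : ℕ) (c : Fin p → ℕ) (hmono : Antitone c) (hpos : ∀ i, 0 < c i)
    (h g : ℕ) (hh1 : 1 ≤ h)
    (hh : IsGreatest {m : ℕ | 1 ≤ m ∧ m ≤ p ∧ ∃ hm : m - 1 < p, m ≤ c ⟨m - 1, hm⟩} h)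
    (hg : IsGreatest {k : ℕ | 1 ≤ k ∧ k ≤ p ∧
      k ^ 2 ≤ ∑ j ∈ Finset.univ.filter (fun j : Fin p => (j : ℕ) < k), c j} g)
    (A : ℝ)
    (hA : A = (∑ j ∈ Finset.univ.filter (fun j : Fin p => (j : ℕ) < h), (c j : ℝ)) / h) :
    (g : ℝ) ≤ A := by
  obtain ⟨⟨hh1', hhp, hmp, hch⟩, hhub⟩ := hh
  obtain ⟨⟨hg1, hgp, hgsum⟩, hgub⟩ := hg
  set Sh : ℕ := ∑ j ∈ Finset.univ.filter (fun j : Fin p => (j : ℕ) < h), c j with hSh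
  have hcast : A = (Sh : ℝ) / h := by
    rw [hA, hSh]; push_cast; ring
  have hp0 : 0 < p := lt_of_lt_of_le hh1 hhp
  -- each of the first h terms is ≥ h
  have hlow : ∀ j : Fin p, (j : ℕ) < h → h ≤ c j := fun j hj =>
    le_trans hch (hmono (by simp [Fin.le_def]; omega))
  -- card of first-h filter is ≥ h
  have hcard : h ≤ (Finset.univ.filter (fun j : Fin p => (j : ℕ) < h)).card := by
    have := Finset.card_le_card_of_injOn
      (f := fun j : ℕ => (⟨j % p, Nat.mod_lt _ hp0⟩ : Fin p))
      (s := Finset.range h)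
      (t := Finset.univ.filter (fun j : Fin p => (j : ℕ) < h))
      (by intro a ha
          simp only [Finset.mem_coe, Finset.mem_range] at ha
          simp only [Finset.mem_coe, Finset.mem_filter, Finset.mem_univ, true_and]
          simpa [Nat.mod_eq_of_lt (lt_of_lt_of_le ha hhp)] using ha)
      (by intro a ha b hb hab
          simp only [Finset.mem_coe, Finset.mem_range] at ha hb
          have : a % p = b % p := congrArg Fin.val hab
          rwa [Nat.mod_eq_of_lt (lt_of_lt_of_le ha hhp),
            Nat.mod_eq_of_lt (lt_of_lt_of_le hb hhp)] at this)
    simpa using this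
  have hShlow : h * h ≤ Sh := by
    calc h * h ≤ (Finset.univ.filter (fun j : Fin p => (j : ℕ) < h)).card * h :=
          Nat.mul_le_mul_right _ hcard
      _ = ∑ _j ∈ Finset.univ.filter (fun j : Fin p => (j : ℕ) < h), h := by
          rw [Finset.sum_const, smul_eq_mul]
      _ ≤ Sh := Finset.sum_le_sum fun j hj => hlow j (by simpa using hj)
  have hAR : (Sh : ℝ) = A * h := by
    rw [hcast]; field_simp
  rcases le_or_gt g h with hgh | hgh
  · -- g ≤ h ≤ A
    have : (h : ℝ) ≤ A := by
      rw [hcast]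
      rw [le_div_iff₀ (by positivity)]
      exact_mod_cast hShlow
    calc (g : ℝ) ≤ (h : ℝ) := by exact_mod_cast hgh
      _ ≤ A := this
  · -- h < g
    -- tail terms are ≤ h
    have hchle : c ⟨h, lt_of_lt_of_le hgh hgp⟩ ≤ h := by
      by_contra hcon
      push_neg at hcon
      have : h + 1 ≤ h := hhub ⟨by omega, le_trans hgh hgp, by
        refine ⟨by omega, ?_⟩
        simpa using hcon⟩
      omega
    have htail : ∀ j : Fin p, h ≤ (j : ℕ) → c j ≤ h :=
      fun j hj => le_trans (hmono (by simp [Fin.le_def]; omega)) hchle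
    -- split the g-sum
    have hsplit : ∑ j ∈ Finset.univ.filter (fun j : Fin p => (j : ℕ) < g), c j
        = Sh + ∑ j ∈ Finset.univ.filter (fun j : Fin p => h ≤ (j : ℕ) ∧ (j : ℕ) < g), c j := by
      rw [hSh]
      rw [← Finset.sum_filter_add_sum_filter_not
        (Finset.univ.filter (fun j : Fin p => (j : ℕ) < g)) (fun j : Fin p => (j : ℕ) < h)]
      congr 1
      · congr 1; ext j; simp; omega
      · congr 1; ext j; simp; omega
    have hcard2 : (Finset.univ.filter (fun j : Fin p => h ≤ (j : ℕ) ∧ (j : ℕ) < g)).card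
        ≤ g - h := by
      have := Finset.card_le_card_of_injOn
        (f := fun j : Fin p => (j : ℕ) - h)
        (s := Finset.univ.filter (fun j : Fin p => h ≤ (j : ℕ) ∧ (j : ℕ) < g))
        (t := Finset.range (g - h))
        (by intro a ha
            simp only [Finset.mem_coe, Finset.mem_filter, Finset.mem_univ, true_and] at ha
            simp only [Finset.mem_coe, Finset.mem_range]; omega)
        (by intro a ha b hb hab
            simp only [Finset.mem_coe, Finset.mem_filter, Finset.mem_univ, true_and] at ha hb
            have hab' : (a : ℕ) - h = (b : ℕ) - h := hab
            exact Fin.ext (by omega))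
      simpa using this
    have htailsum : ∑ j ∈ Finset.univ.filter (fun j : Fin p => h ≤ (j : ℕ) ∧ (j : ℕ) < g), c j
        ≤ (g - h) * h := by
      calc ∑ j ∈ Finset.univ.filter (fun j : Fin p => h ≤ (j : ℕ) ∧ (j : ℕ) < g), c j
          ≤ ∑ _j ∈ Finset.univ.filter (fun j : Fin p => h ≤ (j : ℕ) ∧ (j : ℕ) < g), h :=
            Finset.sum_le_sum fun j hj => htail j (by simp at hj; exact hj.1)
        _ = (Finset.univ.filter (fun j : Fin p => h ≤ (j : ℕ) ∧ (j : ℕ) < g)).card * h := by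
            rw [Finset.sum_const, smul_eq_mul]
        _ ≤ (g - h) * h := Nat.mul_le_mul_right _ hcard2
    have hkey : g ^ 2 ≤ Sh + (g - h) * h := le_trans hgsum (by rw [hsplit]; omega)
    -- pass to reals
    have hkeyR : (g : ℝ) ^ 2 ≤ (Sh : ℝ) + ((g : ℝ) - h) * h := by
      have hghn : h ≤ g := le_of_lt hgh
      have : ((g ^ 2 : ℕ) : ℝ) ≤ ((Sh + (g - h) * h : ℕ) : ℝ) := Nat.cast_le.mpr hkey
      push_cast [Nat.cast_sub hghn] at this
      linarith
    have hh0 : (0 : ℝ) < h := by exact_mod_cast hh1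
    rw [hAR] at hkeyR
    nlinarith [sq_nonneg ((g : ℝ) - h)]
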